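/- Fix 1 ≤ p < 2 and set α = 2 − p, and let u satisfy Hypothesis B on an open set X ⊆ ℝⁿ. For a set K let ‖u‖_α(K) = sup_{x ≠ y ∈ K} |u(x) − u(y)|/|x−y|^α denote the α-Hölder seminorm, and for x₀ ∈ X let ‖u‖_α(x₀) = lim_{ρ↓0} ‖u‖_α(B_ρ(x₀)) (the infinitesimal Hölder norm; the limit exists since ‖u‖_α(B_ρ(x₀)) is nondecreasing in ρ), where B_ρ(x₀) is the closed ball of radius ρ about x₀. Then for every 0 < R < dist(x₀, ∂X): ‖u‖_α(x₀) ≤ (M(u, x₀, R) − u(x₀))/R^α ≤ ‖u‖_α(B_R(x₀)); and consequently ‖u‖_α(x₀) = Θ^M(u, x₀), where Θ^M(u, x₀) = lim_{t↓0} (M(u, x₀, t) − u(x₀))/t^α. -/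

import Mathlib

open Set Filter Topology

noncomputable section

abbrev EucSp (n : ℕ) := EuclideanSpace ℝ (Fin n)

/-- The ball maximum `M(u, y, t) = sup_{|x − y| ≤ t} u(x)` (so `M(u, y, 0) = u(y)`). -/
def ballSup {n : ℕ} (u : EucSp n → EReal) (y : EucSp n) (t : ℝ) : EReal :=
  sSup (u '' Metric.closedBall y t)

/-- Hypothesis B (for `1 ≤ p < 2`, `α = 2 − p`): `X` is open, `u` is upper
semicontinuous with values in `[−∞, ∞)`, not identically `−∞` on any ball contained
in `X`, the maximum principle holds, and `K_p` double monotonicity holds: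
`(M(u,y,t) − M(u,y,s))/(t^α − s^α)` is nondecreasing in `s` and `t` (stated in
cross-multiplied form in `EReal`). -/
def HypB {n : ℕ} (p : ℝ) (X : Set (EucSp n)) (u : EucSp n → EReal) : Prop :=
  IsOpen X ∧ UpperSemicontinuousOn u X ∧ (∀ x ∈ X, u x < ⊤) ∧
  (∀ y : EucSp n, ∀ r : ℝ, 0 < r → Metric.closedBall y r ⊆ X →
    ∃ x ∈ Metric.closedBall y r, u x ≠ ⊥) ∧
  (∀ y : EucSp n, ∀ t : ℝ, 0 < t → Metric.closedBall y t ⊆ X →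
    ballSup u y t = sSup (u '' Metric.sphere y t)) ∧
  (∀ y ∈ X, ∀ s t s' t' : ℝ, 0 ≤ s → s < t → s ≤ s' → t ≤ t' → s' < t' →
    Metric.closedBall y t' ⊆ X →
    (ballSup u y t - ballSup u y s) * (((t' ^ (2 - p) - s' ^ (2 - p) : ℝ)) : EReal) ≤
      (ballSup u y t' - ballSup u y s') * (((t ^ (2 - p) - s ^ (2 - p) : ℝ)) : EReal))

/-- The `α`-Hölder seminorm of `u` on a set `K`. -/
def holderSemi {n : ℕ} (α : ℝ) (u : EucSp n → EReal) (K : Set (EucSp n)) : ℝ :=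
  sSup {c : ℝ | ∃ x ∈ K, ∃ y ∈ K, x ≠ y ∧
    c = |(u x).toReal - (u y).toReal| / dist x y ^ α}

namespace Aux

variable {n : ℕ} {u : EucSp n → EReal} {X : Set (EucSp n)} {p : ℝ}

lemma le_ballSup {y z : EucSp n} {t : ℝ} (h : z ∈ Metric.closedBall y t) :
    u z ≤ ballSup u y t := le_sSup (mem_image_of_mem u h)

lemma ballSup_zero (y : EucSp n) : ballSup u y 0 = u y := by
  rw [ballSup, Metric.closedBall_zero, image_singleton, sSup_singleton]

lemma ballSup_le_of_subset {y y' : EucSp n} {t t' : ℝ}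
    (h : Metric.closedBall y t ⊆ Metric.closedBall y' t') :
    ballSup u y t ≤ ballSup u y' t' := sSup_le_sSup (image_mono h)

lemma ballSup_lt_top (hX : IsOpen X) (husc : UpperSemicontinuousOn u X)
    (htop : ∀ x ∈ X, u x < ⊤) {y : EucSp n} {t : ℝ}
    (hsub : Metric.closedBall y t ⊆ X) : ballSup u y t < ⊤ := by
  set K := Metric.closedBall y t with hK
  have hKc : IsCompact K := isCompact_closedBall y t
  have hr : ∀ x (hx : x ∈ K), ∃ r : ℝ, u x < (r : EReal) := by
    intro x hx
    obtain ⟨z, h1, h2⟩ := exists_between (htop x (hsub hx))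
    refine ⟨z.toReal, ?_⟩
    rwa [EReal.coe_toReal h2.ne (lt_of_le_of_lt bot_le h1).ne']
  choose! r hru using hr
  have hUx : ∀ x (hx : x ∈ K), {w | u w < (r x : EReal)} ∈ 𝓝 x := by
    intro x hx
    have := husc x (hsub hx) (r x) (hru x hx)
    rwa [hX.nhdsWithin_eq (hsub hx)] at this
  obtain ⟨tfin, htfin⟩ := hKc.elim_nhds_subcover' (fun x _ => {w | u w < (r x : EReal)}) hUx
  have hb : ballSup u y t ≤ tfin.sup (fun x => ((r x.1 : ℝ) : EReal)) := by
    apply sSup_le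
    rintro v ⟨z, hz, rfl⟩
    obtain hz' := htfin hz
    simp only [mem_iUnion] at hz'
    obtain ⟨x, hxt, hzx⟩ := hz'
    exact le_trans (le_of_lt hzx) (Finset.le_sup (f := fun x => ((r x.1 : ℝ) : EReal)) hxt)
  refine lt_of_le_of_lt hb ?_
  apply Finset.sup_lt_iff (by simp : (⊥ : EReal) < ⊤) |>.2
  intro x _
  exact EReal.coe_lt_top _

lemma ballSup_ne_bot
    (hnb : ∀ y : EucSp n, ∀ r : ℝ, 0 < r → Metric.closedBall y r ⊆ X →
      ∃ x ∈ Metric.closedBall y r, u x ≠ ⊥)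
    {y : EucSp n} {t : ℝ} (ht : 0 < t) (hsub : Metric.closedBall y t ⊆ X) :
    ballSup u y t ≠ ⊥ := by
  obtain ⟨x, hx, hxb⟩ := hnb y t ht hsub
  exact fun h => hxb (le_bot_iff.1 (h ▸ le_ballSup hx))

lemma alpha_pos (hp2 : p < 2) : 0 < 2 - p := by linarith

lemma u_ne_bot (hB : HypB p X u) (hp2 : p < 2) {y : EucSp n} (hy : y ∈ X) : u y ≠ ⊥ := by
  obtain ⟨hX, husc, htop, hnb, _, hmono⟩ := hB
  have hα : 0 < 2 - p := alpha_pos hp2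
  intro h
  obtain ⟨ε, hε, hball⟩ := Metric.isOpen_iff.1 hX y hy
  set r := ε / 2 with hrdef
  have hr : 0 < r := by positivity
  have hsub : Metric.closedBall y r ⊆ X :=
    (Metric.closedBall_subset_ball (by linarith)).trans hball
  have hsub2 : Metric.closedBall y (r/2) ⊆ X :=
    (Metric.closedBall_subset_closedBall (by linarith)).trans hsub
  have hm := hmono y hy 0 (r/2) (r/2) r le_rfl (by linarith) (by linarith) (by linarith)
    (by linarith) hsub
  have hA2bot : ballSup u y (r/2) ≠ ⊥ := ballSup_ne_bot hnb (by linarith) hsub2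
  have hA2top : ballSup u y (r/2) ≠ ⊤ := (ballSup_lt_top hX husc htop hsub2).ne
  have hA1top : ballSup u y r ≠ ⊤ := (ballSup_lt_top hX husc htop hsub).ne
  have hA1bot : ballSup u y r ≠ ⊥ := ballSup_ne_bot hnb hr hsub
  rw [ballSup_zero, h, EReal.sub_bot hA2bot] at hm
  have hc : (0:ℝ) < r ^ (2-p) - (r/2) ^ (2-p) := by
    have := Real.rpow_lt_rpow (by linarith : (0:ℝ) ≤ r/2) (by linarith : r/2 < r) hα
    linarith
  rw [EReal.top_mul_coe_of_pos hc] at hm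
  rw [← EReal.coe_toReal hA1top hA1bot, ← EReal.coe_toReal hA2top hA2bot,
    ← EReal.coe_sub, ← EReal.coe_mul] at hm
  exact (EReal.coe_lt_top _).ne (top_le_iff.1 hm)

lemma ballSup_ne_bot' (hB : HypB p X u) (hp2 : p < 2) {y : EucSp n} {t : ℝ} (ht : 0 ≤ t)
    (hsub : Metric.closedBall y t ⊆ X) : ballSup u y t ≠ ⊥ := by
  rcases eq_or_lt_of_le ht with h | h
  · rw [← h, ballSup_zero]
    exact u_ne_bot hB hp2 (hsub (Metric.mem_closedBall_self ht))
  · exact ballSup_ne_bot hB.2.2.2.1 h hsub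

lemma ballSup_ne_top (hB : HypB p X u) {y : EucSp n} {t : ℝ}
    (hsub : Metric.closedBall y t ⊆ X) : ballSup u y t ≠ ⊤ :=
  (ballSup_lt_top hB.1 hB.2.1 hB.2.2.1 hsub).ne

/-- Real-valued double monotonicity. -/
lemma realMono (hB : HypB p X u) (hp2 : p < 2) {y : EucSp n} (hy : y ∈ X)
    {s t s' t' : ℝ} (hs : 0 ≤ s) (hst : s < t) (hss' : s ≤ s') (htt' : t ≤ t')
    (hs't' : s' < t') (hsub : Metric.closedBall y t' ⊆ X) :
    ((ballSup u y t).toReal - (ballSup u y s).toReal) * (t' ^ (2-p) - s' ^ (2-p)) ≤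
      ((ballSup u y t').toReal - (ballSup u y s').toReal) * (t ^ (2-p) - s ^ (2-p)) := by
  have hm := hB.2.2.2.2.2 y hy s t s' t' hs hst hss' htt' hs't' hsub
  have hsubs : Metric.closedBall y s ⊆ X :=
    (Metric.closedBall_subset_closedBall (by linarith)).trans hsub
  have hsubt : Metric.closedBall y t ⊆ X :=
    (Metric.closedBall_subset_closedBall (by linarith)).trans hsub
  have hsubs' : Metric.closedBall y s' ⊆ X :=
    (Metric.closedBall_subset_closedBall (by linarith)).trans hsub
  rw [← EReal.coe_toReal (ballSup_ne_top hB hsubt) (ballSup_ne_bot' hB hp2 (by linarith) hsubt),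
    ← EReal.coe_toReal (ballSup_ne_top hB hsubs) (ballSup_ne_bot' hB hp2 hs hsubs),
    ← EReal.coe_toReal (ballSup_ne_top hB hsub) (ballSup_ne_bot' hB hp2 (by linarith) hsub),
    ← EReal.coe_toReal (ballSup_ne_top hB hsubs') (ballSup_ne_bot' hB hp2 (by linarith) hsubs'),
    ← EReal.coe_sub, ← EReal.coe_sub, ← EReal.coe_mul, ← EReal.coe_mul,
    EReal.coe_le_coe_iff] at hm
  exact hm

lemma oneSided (hB : HypB p X u) (hp2 : p < 2) {y x : EucSp n} (hy : y ∈ X) (hx : x ∈ X)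
    {d s' t' : ℝ} (hd : 0 < d) (hdist : dist x y ≤ d) (hds' : d ≤ s') (hs't' : s' < t')
    (hsub : Metric.closedBall y t' ⊆ X) :
    ((u x).toReal - (u y).toReal) * (t' ^ (2-p) - s' ^ (2-p)) ≤
      ((ballSup u y t').toReal - (ballSup u y s').toReal) * d ^ (2-p) := by
  have hα : 0 < 2 - p := alpha_pos hp2
  have hm := realMono hB hp2 hy le_rfl hd (by linarith) (by linarith : d ≤ t') hs't' hsub
  rw [ballSup_zero, Real.zero_rpow hα.ne', sub_zero] at hm
  refine le_trans ?_ hm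
  have hsubd : Metric.closedBall y d ⊆ X :=
    (Metric.closedBall_subset_closedBall (by linarith)).trans hsub
  have hux : (u x).toReal ≤ (ballSup u y d).toReal :=
    EReal.toReal_le_toReal (le_ballSup (Metric.mem_closedBall.2 hdist))
      (u_ne_bot hB hp2 hx) (ballSup_ne_top hB hsubd)
  have hc : (0:ℝ) ≤ t' ^ (2-p) - s' ^ (2-p) := by
    have := Real.rpow_le_rpow (by linarith : (0:ℝ) ≤ s') hs't'.le hα.le
    linarith
  exact mul_le_mul_of_nonneg_right (by linarith) hc

/-- One-directional Hoelder quotient bound centered in a small ball. -/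
lemma osc_bound (hB : HypB p X u) (hp2 : p < 2) {x₀ : EucSp n} {R ρ : ℝ}
    (hρ : 0 < ρ) (h3 : 3 * ρ < R) (hsub : Metric.closedBall x₀ R ⊆ X)
    {x y : EucSp n} (hx : x ∈ Metric.closedBall x₀ ρ) (hy : y ∈ Metric.closedBall x₀ ρ)
    (hxy : x ≠ y) :
    ((u x).toReal - (u y).toReal) * ((R - ρ) ^ (2-p) - (2*ρ) ^ (2-p)) ≤
      ((ballSup u x₀ R).toReal - (u x₀).toReal) * dist x y ^ (2-p) := by
  have hα : 0 < 2 - p := alpha_pos hp2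
  have hρR : ρ < R := by linarith
  have hxX : x ∈ X := hsub (Metric.closedBall_subset_closedBall hρR.le hx)
  have hyX : y ∈ X := hsub (Metric.closedBall_subset_closedBall hρR.le hy)
  set d := dist x y with hddef
  have hd : 0 < d := dist_pos.2 hxy
  set δ := dist y x₀ with hδdef
  have hδ : δ ≤ ρ := Metric.mem_closedBall.1 hy
  have hδ0 : 0 ≤ δ := dist_nonneg
  have hd2ρ : d ≤ 2 * ρ := by
    have h1 : dist x x₀ ≤ ρ := Metric.mem_closedBall.1 hx
    have := dist_triangle x x₀ y
    rw [hddef]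
    calc dist x y ≤ dist x x₀ + dist x₀ y := dist_triangle x x₀ y
    _ ≤ ρ + ρ := by rw [dist_comm x₀ y]; exact add_le_add h1 hδ
    _ = 2 * ρ := by ring
  have hsuby : Metric.closedBall y (R - δ) ⊆ Metric.closedBall x₀ R :=
    Metric.closedBall_subset_closedBall' (by rw [hδdef]; linarith)
  have h1 := oneSided hB hp2 hyX hxX hd hddef.ge hd2ρ
    (by linarith : 2*ρ < R - δ) (hsuby.trans hsub)
  -- bound the RHS of h1
  have hsub2ρ : Metric.closedBall y (2*ρ) ⊆ Metric.closedBall x₀ R :=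
    Metric.closedBall_subset_closedBall' (by linarith)
  have hMy : (ballSup u y (R - δ)).toReal ≤ (ballSup u x₀ R).toReal :=
    EReal.toReal_le_toReal (ballSup_le_of_subset hsuby)
      (ballSup_ne_bot' hB hp2 (by linarith) ((hsuby.trans hsub)))
      (ballSup_ne_top hB hsub)
  have hmy : (u x₀).toReal ≤ (ballSup u y (2*ρ)).toReal :=
    EReal.toReal_le_toReal (le_ballSup (by
      simp only [Metric.mem_closedBall, dist_comm x₀ y]
      linarith))
      (u_ne_bot hB hp2 (hsub (Metric.mem_closedBall_self (by linarith))))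
      (ballSup_ne_top hB (hsub2ρ.trans hsub))
  have hdα : (0:ℝ) ≤ d ^ (2-p) := Real.rpow_nonneg dist_nonneg _
  have h2 : ((ballSup u y (R-δ)).toReal - (ballSup u y (2*ρ)).toReal) * d ^ (2-p) ≤
      ((ballSup u x₀ R).toReal - (u x₀).toReal) * d ^ (2-p) :=
    mul_le_mul_of_nonneg_right (by linarith) hdα
  -- LHS comparison: coefficient monotone
  have hcoef : (R - ρ) ^ (2-p) - (2*ρ) ^ (2-p) ≤ (R - δ) ^ (2-p) - (2*ρ) ^ (2-p) := by
    have := Real.rpow_le_rpow (by linarith : (0:ℝ) ≤ R - ρ) (by linarith : R - ρ ≤ R - δ) hα.le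
    linarith
  have hcoef0 : (0:ℝ) ≤ (R - ρ) ^ (2-p) - (2*ρ) ^ (2-p) := by
    have := Real.rpow_le_rpow (by linarith : (0:ℝ) ≤ 2*ρ) (by linarith : 2*ρ ≤ R - ρ) hα.le
    linarith
  rcases le_or_gt ((u x).toReal - (u y).toReal) 0 with hΔ | hΔ
  · have hD : (u x₀).toReal ≤ (ballSup u x₀ R).toReal :=
      EReal.toReal_le_toReal (le_ballSup (Metric.mem_closedBall_self (by linarith)))
        (u_ne_bot hB hp2 (hsub (Metric.mem_closedBall_self (by linarith))))
        (ballSup_ne_top hB hsub)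
    calc ((u x).toReal - (u y).toReal) * ((R - ρ) ^ (2-p) - (2*ρ) ^ (2-p))
        ≤ 0 := mul_nonpos_of_nonpos_of_nonneg hΔ hcoef0
    _ ≤ _ := mul_nonneg (sub_nonneg.2 hD) hdα
  · exact le_trans (mul_le_mul_of_nonneg_left hcoef hΔ.le) (h1.trans h2)

lemma holder_bddAbove (hB : HypB p X u) (hp2 : p < 2) {x₀ : EucSp n} {R : ℝ}
    (hR : 0 < R) (hsub : Metric.closedBall x₀ R ⊆ X) :
    BddAbove {c : ℝ | ∃ x ∈ Metric.closedBall x₀ R, ∃ y ∈ Metric.closedBall x₀ R, x ≠ y ∧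
      c = |(u x).toReal - (u y).toReal| / dist x y ^ (2 - p)} := by
  have hα : 0 < 2 - p := alpha_pos hp2
  -- a compactness margin
  obtain ⟨ε, hε, hsubε⟩ : ∃ ε > 0, Metric.closedBall x₀ (R + ε) ⊆ X := by
    obtain ⟨ε, hε, h⟩ := (isCompact_closedBall x₀ R).exists_cthickening_subset_open hB.1 hsub
    refine ⟨ε, hε, ?_⟩
    rw [cthickening_closedBall hε.le hR.le, add_comm] at h
    exact h
  set C := (ballSup u x₀ (R + ε)).toReal with hCdef
  have hCub : ∀ z ∈ Metric.closedBall x₀ (R + ε), (u z).toReal ≤ C := fun z hz =>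
    EReal.toReal_le_toReal (le_ballSup hz) (u_ne_bot hB hp2 (hsubε hz))
      (ballSup_ne_top hB hsubε)
  set cε := ε ^ (2 - p) - (ε/2) ^ (2 - p) with hcεdef
  have hcε : 0 < cε := by
    have := Real.rpow_lt_rpow (by linarith : (0:ℝ) ≤ ε/2) (by linarith : ε/2 < ε) hα
    simp only [hcεdef]; linarith
  -- the local one-sided step estimate
  have hstep : ∀ y ∈ Metric.closedBall x₀ R, ∀ z : EucSp n, 0 < dist z y → dist z y ≤ ε/2 →
      (u z).toReal - (u y).toReal ≤ (C - (u y).toReal) * dist z y ^ (2 - p) / cε := by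
    intro y hy z hd hd2
    have hyR : dist y x₀ ≤ R := Metric.mem_closedBall.1 hy
    have hyX : y ∈ X := hsub hy
    have hzX : z ∈ X := by
      apply hsubε
      simp only [Metric.mem_closedBall]
      calc dist z x₀ ≤ dist z y + dist y x₀ := dist_triangle z y x₀
      _ ≤ R + ε := by linarith
    have hsuby : Metric.closedBall y ε ⊆ Metric.closedBall x₀ (R + ε) :=
      Metric.closedBall_subset_closedBall' (by linarith)
    have h1 := oneSided hB hp2 hyX hzX hd le_rfl hd2 (by linarith : ε/2 < ε)
      (hsuby.trans hsubε)
    have hMy : (ballSup u y ε).toReal ≤ C :=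
      EReal.toReal_le_toReal (ballSup_le_of_subset hsuby)
        (ballSup_ne_bot' hB hp2 hε.le (hsuby.trans hsubε)) (ballSup_ne_top hB hsubε)
    have hmy : (u y).toReal ≤ (ballSup u y (ε/2)).toReal := by
      refine EReal.toReal_le_toReal (le_ballSup (Metric.mem_closedBall_self (by linarith)))
        (u_ne_bot hB hp2 hyX) (ballSup_ne_top hB ?_)
      exact (Metric.closedBall_subset_closedBall (by linarith)).trans (hsuby.trans hsubε)
    have hdα : (0:ℝ) ≤ dist z y ^ (2 - p) := Real.rpow_nonneg dist_nonneg _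
    rw [le_div_iff₀ hcε]
    calc ((u z).toReal - (u y).toReal) * cε ≤
        ((ballSup u y ε).toReal - (ballSup u y (ε/2)).toReal) * dist z y ^ (2 - p) := h1
    _ ≤ (C - (u y).toReal) * dist z y ^ (2 - p) :=
        mul_le_mul_of_nonneg_right (by linarith) hdα
  -- a step length small enough for doubling
  set η := min (ε/2) ((cε/2) ^ (2 - p)⁻¹) with hηdef
  have hη : 0 < η := lt_min (half_pos hε) (Real.rpow_pos_of_pos (half_pos hcε) _)
  have hηε : η ≤ ε/2 := min_le_left _ _
  have hηα : η ^ (2 - p) ≤ cε / 2 := by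
    have h1 : η ^ (2 - p) ≤ ((cε/2) ^ (2 - p)⁻¹) ^ (2 - p) :=
      Real.rpow_le_rpow hη.le (min_le_right _ _) hα.le
    rwa [Real.rpow_inv_rpow (half_pos hcε).le hα.ne'] at h1
  -- the doubling step
  have hstep2 : ∀ y ∈ Metric.closedBall x₀ R, ∀ z ∈ Metric.closedBall x₀ R,
      dist z y ≤ η → 2 * (u y).toReal - C ≤ (u z).toReal := by
    intro y hy z hz hdη
    have hyC : (u y).toReal ≤ C :=
      hCub y (Metric.closedBall_subset_closedBall (by linarith) hy)
    have hzC : (u z).toReal ≤ C :=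
      hCub z (Metric.closedBall_subset_closedBall (by linarith) hz)
    rcases eq_or_lt_of_le (dist_nonneg : (0:ℝ) ≤ dist z y) with h0 | h0
    · have : z = y := by rwa [eq_comm, dist_eq_zero] at h0
      subst this; linarith
    · have h1 := hstep z hz y (by rwa [dist_comm]) (by rw [dist_comm]; linarith)
      have hdα : dist y z ^ (2 - p) ≤ cε / 2 := by
        refine le_trans (Real.rpow_le_rpow dist_nonneg ?_ hα.le) hηα
        rw [dist_comm]; linarith
      have h2 : (C - (u z).toReal) * dist y z ^ (2 - p) / cε ≤
          (C - (u z).toReal) * (cε/2) / cε := by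
        gcongr
      have h3 : (C - (u z).toReal) * (cε/2) / cε = (C - (u z).toReal) / 2 := by
        field_simp
      have h4 : (u y).toReal - (u z).toReal ≤ (C - (u z).toReal) / 2 := by
        calc (u y).toReal - (u z).toReal ≤ _ := h1
        _ ≤ _ := h2
        _ = _ := h3
      linarith
  -- the chain lower bound
  set N := ⌈R / η⌉₊ + 1 with hNdef
  have hNpos : 0 < (N:ℝ) := by positivity
  have hNη : R ≤ (N:ℝ) * η := by
    have h1 : R / η ≤ (⌈R / η⌉₊ : ℝ) := Nat.le_ceil _
    have h2 : (⌈R / η⌉₊ : ℝ) ≤ (N:ℝ) := by simp [hNdef]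
    rw [div_le_iff₀ hη] at h1
    nlinarith
  set D := C - (u x₀).toReal with hDdef
  have hD0 : 0 ≤ D := by
    have := hCub x₀ (Metric.mem_closedBall_self (by linarith))
    simp only [hDdef]; linarith
  set m₁ := C - 2 ^ N * D with hm₁def
  have hm₁C : m₁ ≤ C := by
    have h2N : (1:ℝ) ≤ 2 ^ N := by
      have h := pow_le_pow_right₀ (by norm_num : (1:ℝ) ≤ 2) (Nat.zero_le N)
      simpa using h
    nlinarith
  have hlow : ∀ y ∈ Metric.closedBall x₀ R, m₁ ≤ (u y).toReal := by
    intro y hy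
    set φ : ℕ → EucSp n := fun i => x₀ + ((i : ℝ)/(N:ℝ)) • (y - x₀) with hφdef
    have hφmem : ∀ i, i ≤ N → φ i ∈ Metric.closedBall x₀ R := by
      intro i hi
      simp only [hφdef, Metric.mem_closedBall, dist_eq_norm, add_sub_cancel_left]
      rw [norm_smul, Real.norm_eq_abs]
      have h1 : |(i:ℝ)/(N:ℝ)| ≤ 1 := by
        rw [abs_of_nonneg (by positivity)]
        rw [div_le_one hNpos]
        exact_mod_cast hi
      have h2 : ‖y - x₀‖ ≤ R := by
        rw [← dist_eq_norm]; exact Metric.mem_closedBall.1 hy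
      calc |(i:ℝ)/(N:ℝ)| * ‖y - x₀‖ ≤ 1 * ‖y - x₀‖ :=
        mul_le_mul_of_nonneg_right h1 (norm_nonneg _)
      _ ≤ R := by rwa [one_mul]
    have hφd : ∀ i : ℕ, dist (φ (i+1)) (φ i) ≤ η := by
      intro i
      have h1 : φ (i+1) - φ i = ((1:ℝ)/(N:ℝ)) • (y - x₀) := by
        simp only [hφdef]
        rw [add_sub_add_left_eq_sub, ← sub_smul]
        congr 1
        push_cast
        ring
      rw [dist_eq_norm, h1, norm_smul, Real.norm_eq_abs, abs_of_nonneg (by positivity)]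
      have h2 : ‖y - x₀‖ ≤ R := by
        rw [← dist_eq_norm]; exact Metric.mem_closedBall.1 hy
      calc (1/(N:ℝ)) * ‖y - x₀‖ ≤ (1/(N:ℝ)) * R := by
            apply mul_le_mul_of_nonneg_left h2 (by positivity)
      _ ≤ η := by
            rw [div_mul_eq_mul_div, div_le_iff₀ hNpos]
            nlinarith
    have hind : ∀ i, i ≤ N → C - 2 ^ i * D ≤ (u (φ i)).toReal := by
      intro i
      induction i with
      | zero =>
        intro _
        have hφ0 : φ 0 = x₀ := by simp [hφdef]
        rw [hφ0, pow_zero]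
        simp only [hDdef]; linarith
      | succ i ih =>
        intro hi
        have h1 := ih (by omega)
        have h2 := hstep2 (φ i) (hφmem i (by omega)) (φ (i+1)) (hφmem (i+1) hi) (hφd i)
        have h3 : (2:ℝ) ^ (i+1) = 2 * 2 ^ i := by ring
        nlinarith
    have hφN : φ N = y := by
      simp only [hφdef, div_self hNpos.ne', one_smul]
      abel
    have := hind N le_rfl
    rwa [hφN] at this
  -- assemble the bound
  refine ⟨max ((C - m₁)/cε) ((C - m₁)/(ε/2) ^ (2 - p)), ?_⟩
  rintro c ⟨x, hx, y, hy, hxy, rfl⟩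
  have hd : 0 < dist x y := dist_pos.2 hxy
  have hdα : 0 < dist x y ^ (2 - p) := Real.rpow_pos_of_pos hd _
  have hxC : (u x).toReal ≤ C := hCub x (Metric.closedBall_subset_closedBall (by linarith) hx)
  have hyC : (u y).toReal ≤ C := hCub y (Metric.closedBall_subset_closedBall (by linarith) hy)
  have hxm : m₁ ≤ (u x).toReal := hlow x hx
  have hym : m₁ ≤ (u y).toReal := hlow y hy
  have habs : |(u x).toReal - (u y).toReal| ≤ C - m₁ := by
    rw [abs_sub_le_iff]; constructor <;> linarith
  rcases le_or_gt (dist x y) (ε/2) with hsmall | hlarge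
  · refine le_trans ?_ (le_max_left _ _)
    rw [div_le_div_iff₀ hdα hcε]
    have h1 := hstep y hy x hd hsmall
    have h2 := hstep x hx y (by rwa [dist_comm]) (by rwa [dist_comm])
    rw [dist_comm y x] at h2
    have h3 : |(u x).toReal - (u y).toReal| ≤ (C - m₁) * dist x y ^ (2 - p) / cε := by
      rw [abs_sub_le_iff]
      constructor
      · refine h1.trans ?_
        gcongr
      · refine h2.trans ?_
        gcongr
    calc |(u x).toReal - (u y).toReal| * cε ≤
        ((C - m₁) * dist x y ^ (2 - p) / cε) * cε := mul_le_mul_of_nonneg_right h3 hcε.le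
    _ = (C - m₁) * dist x y ^ (2 - p) := by field_simp
  · refine le_trans ?_ (le_max_right _ _)
    have hεα : 0 < (ε/2) ^ (2 - p) := Real.rpow_pos_of_pos (by linarith) _
    refine div_le_div₀ (by linarith) habs hεα ?_
    exact Real.rpow_le_rpow (by linarith) hlarge.le hα.le

lemma holderSemi_nonneg {α : ℝ} {K : Set (EucSp n)} : 0 ≤ holderSemi α u K := by
  apply Real.sSup_nonneg
  rintro c ⟨x, hx, y, hy, hxy, rfl⟩
  exact div_nonneg (abs_nonneg _) (Real.rpow_nonneg dist_nonneg _)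

/-- The easy direction: the density quotient is bounded by the Hoelder seminorm. -/
lemma quot_le_holder (hB : HypB p X u) (hp2 : p < 2) {x₀ : EucSp n} {t : ℝ}
    (ht : 0 < t) (hsub : Metric.closedBall x₀ t ⊆ X) :
    ((ballSup u x₀ t).toReal - (u x₀).toReal) / t ^ (2 - p) ≤
      holderSemi (2 - p) u (Metric.closedBall x₀ t) := by
  have hα : 0 < 2 - p := alpha_pos hp2
  have htα : 0 < t ^ (2 - p) := Real.rpow_pos_of_pos ht _
  set m := (ballSup u x₀ t).toReal with hmdef
  set a := (u x₀).toReal with hadef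
  set f := holderSemi (2 - p) u (Metric.closedBall x₀ t) with hfdef
  have hf0 : 0 ≤ f := holderSemi_nonneg
  have hx₀X : x₀ ∈ X := hsub (Metric.mem_closedBall_self ht.le)
  rcases le_or_gt m a with hma | hma
  · exact le_trans (div_nonpos_of_nonpos_of_nonneg (by linarith) htα.le) hf0
  · rw [div_le_iff₀ htα]
    refine le_of_forall_pos_le_add ?_
    intro ε hε
    set b := max a (m - ε) with hbdef
    have hbm : b < m := max_lt hma (by linarith)
    have hblt : (b : EReal) < ballSup u x₀ t := by
      rw [← EReal.coe_toReal (ballSup_ne_top hB hsub) (ballSup_ne_bot' hB hp2 ht.le hsub)]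
      exact_mod_cast hbm
    obtain ⟨v, ⟨x, hxball, rfl⟩, hv⟩ := lt_sSup_iff.1 hblt
    have hxX : x ∈ X := hsub hxball
    have hxb : u x ≠ ⊥ := ((bot_lt_iff_ne_bot.2 (EReal.coe_ne_bot b)).trans hv).ne'
    have hxt : u x ≠ ⊤ := (hB.2.2.1 x hxX).ne
    have hbx : b < (u x).toReal := by
      rw [← EReal.coe_toReal hxt hxb] at hv
      exact_mod_cast hv
    have hax : a < (u x).toReal := lt_of_le_of_lt (le_max_left _ _) hbx
    have hmx : m - ε < (u x).toReal := lt_of_le_of_lt (le_max_right _ _) hbx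
    have hxx₀ : x ≠ x₀ := by
      intro h
      rw [h] at hax
      exact lt_irrefl _ hax
    have hd : 0 < dist x x₀ := dist_pos.2 hxx₀
    have hdt : dist x x₀ ≤ t := Metric.mem_closedBall.1 hxball
    have hc₀ : |(u x).toReal - a| / dist x x₀ ^ (2 - p) ≤ f := by
      apply le_csSup (holder_bddAbove hB hp2 ht hsub)
      exact ⟨x, hxball, x₀, Metric.mem_closedBall_self ht.le, hxx₀, rfl⟩
    have hdα : 0 < dist x x₀ ^ (2 - p) := Real.rpow_pos_of_pos hd _
    have h6 : |(u x).toReal - a| ≤ f * dist x x₀ ^ (2 - p) := by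
      rw [← div_le_iff₀ hdα] at *
      exact hc₀
    have h7 : f * dist x x₀ ^ (2 - p) ≤ f * t ^ (2 - p) :=
      mul_le_mul_of_nonneg_left (Real.rpow_le_rpow dist_nonneg hdt hα.le) hf0
    have h5 : m - ε - a ≤ |(u x).toReal - a| := by
      rw [abs_of_nonneg (by linarith)]
      linarith
    linarith

/-- Monotone convergence from the right at `0`. -/
lemma tendsto_sInf_right {f : ℝ → ℝ} {r : ℝ} (hr : 0 < r)
    (hmono : ∀ s t, 0 < s → s ≤ t → t ≤ r → f s ≤ f t)
    (h0 : ∀ t, 0 < t → t ≤ r → 0 ≤ f t) :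
    Tendsto f (𝓝[>] (0:ℝ)) (𝓝 (sInf (f '' Ioc 0 r))) := by
  set A := sInf (f '' Ioc 0 r) with hA
  have hne : (f '' Ioc 0 r).Nonempty := ⟨f r, r, ⟨hr, le_rfl⟩, rfl⟩
  have hbdd : BddBelow (f '' Ioc 0 r) := by
    refine ⟨0, ?_⟩
    rintro v ⟨t, ht, rfl⟩
    exact h0 t ht.1 ht.2
  rw [Metric.tendsto_nhdsWithin_nhds]
  intro ε hε
  obtain ⟨v, ⟨t₀, ht₀, rfl⟩, hv⟩ := Real.lt_sInf_add_pos hne hε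
  refine ⟨t₀, ht₀.1, ?_⟩
  intro t htI htd
  have ht : 0 < t := htI
  have htt₀ : t < t₀ := by
    rwa [Real.dist_eq, sub_zero, abs_of_pos ht] at htd
  have h1 : A ≤ f t := csInf_le hbdd ⟨t, ⟨ht, htt₀.le.trans ht₀.2⟩, rfl⟩
  have h2 : f t ≤ f t₀ := hmono t t₀ ht htt₀.le ht₀.2
  rw [Real.dist_eq, abs_sub_lt_iff]
  constructor <;> linarith

end Aux

open Aux

/-- Under Hypothesis B, the infinitesimal Hölder norm
`‖u‖_α(x₀) = lim_{ρ↓0} ‖u‖_α(B_ρ(x₀))` exists, is squeezed between the density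
quotients, and equals the density `Θ^M(u, x₀)`. -/
theorem stmt16 (n : ℕ) (p : ℝ) (hp1 : 1 ≤ p) (hp2 : p < 2)
    (X : Set (EucSp n)) (u : EucSp n → EReal) (hB : HypB p X u)
    (x₀ : EucSp n) (hx₀ : x₀ ∈ X) :
    ∃ H : ℝ,
      Tendsto (fun ρ : ℝ => holderSemi (2 - p) u (Metric.closedBall x₀ ρ))
        (𝓝[>] 0) (𝓝 H) ∧
      (∀ R : ℝ, 0 < R → Metric.closedBall x₀ R ⊆ X →
        H ≤ ((ballSup u x₀ R).toReal - (u x₀).toReal) / R ^ (2 - p) ∧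
        ((ballSup u x₀ R).toReal - (u x₀).toReal) / R ^ (2 - p) ≤
          holderSemi (2 - p) u (Metric.closedBall x₀ R)) ∧
      Tendsto (fun t : ℝ => ((ballSup u x₀ t).toReal - (u x₀).toReal) / t ^ (2 - p))
        (𝓝[>] 0) (𝓝 H) := by
  have hα : 0 < 2 - p := alpha_pos hp2
  obtain ⟨r₀, hr₀, hsubr₀⟩ : ∃ r > 0, Metric.closedBall x₀ r ⊆ X := by
    obtain ⟨ε, hε, hball⟩ := Metric.isOpen_iff.1 hB.1 x₀ hx₀
    exact ⟨ε/2, by linarith, (Metric.closedBall_subset_ball (by linarith)).trans hball⟩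
  set f : ℝ → ℝ := fun ρ => holderSemi (2 - p) u (Metric.closedBall x₀ ρ) with hfdef
  set g : ℝ → ℝ := fun t => ((ballSup u x₀ t).toReal - (u x₀).toReal) / t ^ (2 - p)
    with hgdef
  -- monotonicity of f
  have hfmono : ∀ s t, 0 < s → s ≤ t → t ≤ r₀ → f s ≤ f t := by
    intro s t hs hst htr
    have hsubt : Metric.closedBall x₀ t ⊆ X :=
      (Metric.closedBall_subset_closedBall htr).trans hsubr₀
    have hSsub : {c : ℝ | ∃ x ∈ Metric.closedBall x₀ s, ∃ y ∈ Metric.closedBall x₀ s,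
        x ≠ y ∧ c = |(u x).toReal - (u y).toReal| / dist x y ^ (2 - p)} ⊆
        {c : ℝ | ∃ x ∈ Metric.closedBall x₀ t, ∃ y ∈ Metric.closedBall x₀ t,
        x ≠ y ∧ c = |(u x).toReal - (u y).toReal| / dist x y ^ (2 - p)} := by
      rintro c ⟨x, hx, y, hy, hxy, rfl⟩
      exact ⟨x, Metric.closedBall_subset_closedBall hst hx,
        y, Metric.closedBall_subset_closedBall hst hy, hxy, rfl⟩
    rcases eq_empty_or_nonempty {c : ℝ | ∃ x ∈ Metric.closedBall x₀ s,
        ∃ y ∈ Metric.closedBall x₀ s, x ≠ y ∧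
        c = |(u x).toReal - (u y).toReal| / dist x y ^ (2 - p)} with hemp | hne
    · show holderSemi (2 - p) u _ ≤ holderSemi (2 - p) u _
      unfold holderSemi
      rw [hemp, Real.sSup_empty]
      exact holderSemi_nonneg (α := 2 - p) (K := Metric.closedBall x₀ t)
    · exact csSup_le_csSup (holder_bddAbove hB hp2 (hs.trans_le hst) hsubt) hne hSsub
  have hf0 : ∀ t, 0 < t → t ≤ r₀ → 0 ≤ f t := fun t _ _ => holderSemi_nonneg
  -- monotonicity of g
  have hg0 : ∀ t, 0 < t → Metric.closedBall x₀ t ⊆ X → 0 ≤ g t := by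
    intro t ht hsubt
    apply div_nonneg _ (Real.rpow_nonneg ht.le _)
    have := EReal.toReal_le_toReal (le_ballSup (Metric.mem_closedBall_self ht.le))
      (u_ne_bot hB hp2 hx₀) (ballSup_ne_top hB hsubt)
    linarith
  have hgmono : ∀ s t, 0 < s → s ≤ t → t ≤ r₀ → g s ≤ g t := by
    intro s t hs hst htr
    rcases eq_or_lt_of_le hst with rfl | hst'
    · exact le_rfl
    have hsubt : Metric.closedBall x₀ t ⊆ X :=
      (Metric.closedBall_subset_closedBall htr).trans hsubr₀
    have hm := realMono hB hp2 hx₀ le_rfl hs le_rfl hst (by linarith) hsubt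
    rw [ballSup_zero, Real.zero_rpow hα.ne', sub_zero, sub_zero] at hm
    have hsα : 0 < s ^ (2 - p) := Real.rpow_pos_of_pos hs _
    have htα : 0 < t ^ (2 - p) := Real.rpow_pos_of_pos (by linarith) _
    rw [hgdef]
    simp only
    rw [div_le_div_iff₀ hsα htα]
    linarith
  set H := sInf (f '' Ioc 0 r₀) with hHdef
  have hbddf : BddBelow (f '' Ioc 0 r₀) := by
    refine ⟨0, ?_⟩
    rintro v ⟨t, ht, rfl⟩
    exact hf0 t ht.1 ht.2
  have hftend : Tendsto f (𝓝[>] (0:ℝ)) (𝓝 H) := tendsto_sInf_right hr₀ hfmono hf0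
  -- the key upper bound H ≤ g R
  have key : ∀ R, 0 < R → Metric.closedBall x₀ R ⊆ X → H ≤ g R := by
    intro R hR hsubR
    set D := (ballSup u x₀ R).toReal - (u x₀).toReal with hDdef
    have hD0 : 0 ≤ D := by
      have := EReal.toReal_le_toReal (le_ballSup (Metric.mem_closedBall_self hR.le))
        (u_ne_bot hB hp2 hx₀) (ballSup_ne_top hB hsubR)
      simp only [hDdef]; linarith
    have hcont : Tendsto (fun ρ : ℝ => D / ((R - ρ) ^ (2 - p) - (2*ρ) ^ (2 - p)))
        (𝓝[>] (0:ℝ)) (𝓝 (g R)) := by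
      have c1 : ContinuousAt (fun ρ : ℝ => (R - ρ) ^ (2 - p)) 0 := by
        refine ContinuousAt.comp (Real.continuousAt_rpow_const _ _ (Or.inl ?_))
          ((continuous_const.sub continuous_id).continuousAt)
        simp only [sub_zero]
        exact hR.ne'
      have c2 : ContinuousAt (fun ρ : ℝ => (2*ρ) ^ (2 - p)) 0 := by
        exact ContinuousAt.comp (Real.continuousAt_rpow_const _ _ (Or.inr hα.le))
          ((continuous_const.mul continuous_id).continuousAt)
      have cden := c1.sub c2
      have hden : ((R - (0:ℝ)) ^ (2 - p) - (2*(0:ℝ)) ^ (2 - p)) = R ^ (2 - p) := by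
        rw [sub_zero, mul_zero, Real.zero_rpow hα.ne', sub_zero]
      have hdenne : ((R - (0:ℝ)) ^ (2 - p) - (2*(0:ℝ)) ^ (2 - p)) ≠ 0 := by
        rw [hden]
        exact (Real.rpow_pos_of_pos hR _).ne'
      have hco : ContinuousAt
          (fun ρ : ℝ => D / ((R - ρ) ^ (2 - p) - (2*ρ) ^ (2 - p))) 0 :=
        continuousAt_const.div cden hdenne
      have h2 : Tendsto (fun ρ : ℝ => D / ((R - ρ) ^ (2 - p) - (2*ρ) ^ (2 - p)))
          (𝓝 (0:ℝ)) (𝓝 (D / R ^ (2 - p))) := by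
        have h3 := hco.tendsto
        simpa [Real.zero_rpow hα.ne'] using h3
      exact h2.mono_left nhdsWithin_le_nhds
    have hev : ∀ᶠ ρ in 𝓝[>] (0:ℝ), H ≤ D / ((R - ρ) ^ (2 - p) - (2*ρ) ^ (2 - p)) := by
      have hmin : (0:ℝ) < min r₀ (R/3) := lt_min hr₀ (by linarith)
      filter_upwards [Ioo_mem_nhdsGT hmin] with ρ hρ
      obtain ⟨hρ0, hρm⟩ := hρ
      have hρr₀ : ρ < r₀ := lt_of_lt_of_le hρm (min_le_left _ _)
      have h3ρ : 3 * ρ < R := by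
        have := lt_of_lt_of_le hρm (min_le_right _ _)
        linarith
      have hc₂ : 0 < (R - ρ) ^ (2 - p) - (2*ρ) ^ (2 - p) := by
        have := Real.rpow_lt_rpow (by linarith : (0:ℝ) ≤ 2*ρ)
          (by linarith : 2*ρ < R - ρ) hα
        linarith
      have hH1 : H ≤ f ρ := csInf_le hbddf ⟨ρ, ⟨hρ0, hρr₀.le⟩, rfl⟩
      refine hH1.trans ?_
      show holderSemi (2 - p) u _ ≤ _
      unfold holderSemi
      apply Real.sSup_le _ (div_nonneg hD0 hc₂.le)
      rintro c ⟨x, hx, y, hy, hxy, rfl⟩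
      have hd : 0 < dist x y := dist_pos.2 hxy
      have hdα : 0 < dist x y ^ (2 - p) := Real.rpow_pos_of_pos hd _
      have h1 := osc_bound hB hp2 hρ0 h3ρ hsubR hx hy hxy
      have h2 := osc_bound hB hp2 hρ0 h3ρ hsubR hy hx hxy.symm
      rw [dist_comm y x] at h2
      rw [div_le_div_iff₀ hdα hc₂]
      rcases abs_cases ((u x).toReal - (u y).toReal) with ⟨he, _⟩ | ⟨he, _⟩
      · rw [he, hDdef]; exact h1
      · rw [he, neg_sub, hDdef]; exact h2
    exact ge_of_tendsto hcont hev
  have hgf : ∀ t, 0 < t → Metric.closedBall x₀ t ⊆ X → g t ≤ f t := fun t ht hsubt =>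
    quot_le_holder hB hp2 ht hsubt
  have hEq : sInf (g '' Ioc 0 r₀) = H := by
    have hbddg : BddBelow (g '' Ioc 0 r₀) := by
      refine ⟨0, ?_⟩
      rintro v ⟨t, ht, rfl⟩
      exact hg0 t ht.1 ((Metric.closedBall_subset_closedBall ht.2).trans hsubr₀)
    apply le_antisymm
    · rw [hHdef]
      refine le_csInf ⟨f r₀, r₀, ⟨hr₀, le_rfl⟩, rfl⟩ ?_
      rintro v ⟨t, ht, rfl⟩
      have hsubt : Metric.closedBall x₀ t ⊆ X :=
        (Metric.closedBall_subset_closedBall ht.2).trans hsubr₀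
      exact (csInf_le hbddg ⟨t, ht, rfl⟩).trans (hgf t ht.1 hsubt)
    · refine le_csInf ⟨g r₀, r₀, ⟨hr₀, le_rfl⟩, rfl⟩ ?_
      rintro v ⟨t, ht, rfl⟩
      exact key t ht.1 ((Metric.closedBall_subset_closedBall ht.2).trans hsubr₀)
  have hgtend : Tendsto g (𝓝[>] (0:ℝ)) (𝓝 H) := by
    have := tendsto_sInf_right hr₀ hgmono (fun t ht htr =>
      hg0 t ht ((Metric.closedBall_subset_closedBall htr).trans hsubr₀))
    rwa [hEq] at this
  exact ⟨H, hftend, fun R hR hsubR => ⟨key R hR hsubR, hgf R hR hsubR⟩, hgtend⟩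


end
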